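/- Let 𝒟 be the set of 0/1-arrays on the rows 1,…,n−1 of the triangle Δ_n satisfying: (1) the three entries in the first two rows are 0; (2) row r contains exactly r−2 ones for 3 ≤ r ≤ n−1; (3) between any two consecutive 1's in row r (3 < r) there is exactly one 1 in row r−1, and between any two consecutive 1's in row r (r < n−1) there is exactly one 1 in row r+1; (4) a boundary alternation condition in row n−1. Then the map sending a double path p at the top vertex θ to the 0/1-array d(p) whose entry is 0 exactly at points of p is a bijection from the set of double paths at θ onto 𝒟. -/

import Mathlib

/-- One step down in the triangle `Δ_n`: from `ε_k + ε_{l+1}` (with `k < l`) one may go to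
`ε_{k+1} + ε_{l+1}` or to `ε_k + ε_l`.  Points are encoded as pairs `(i,j)` with `i < j`. -/
def PStep (p q : ℕ × ℕ) : Prop :=
  p.1 + 1 < p.2 ∧ (q = (p.1 + 1, p.2) ∨ q = (p.1, p.2 - 1))

/-- A path in `Δ_n`. -/
def IsPath (n : ℕ) (P : List (ℕ × ℕ)) : Prop :=
  P ≠ [] ∧ (∀ x ∈ P, 1 ≤ x.1 ∧ x.1 < x.2 ∧ x.2 ≤ n) ∧ P.Chain' PStep ∧
    ∃ k, P.getLast? = some (k, k + 1)

/-- A double path at `β` in `Δ_n`. -/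
def DoublePathAt (n : ℕ) (β : ℕ × ℕ) (P1 P2 : List (ℕ × ℕ)) : Prop :=
  IsPath n P1 ∧ IsPath n P2 ∧ P1.length = P2.length ∧
  P1.head? = some β ∧ P2.head? = some β ∧
  (∀ t, 1 ≤ t → t < P1.length →
    (P2.getD t (0, 0)).1 + (P2.getD t (0, 0)).2 <
      (P1.getD t (0, 0)).1 + (P1.getD t (0, 0)).2) ∧
  ∃ k, P1.getLast? = some (k + 1, k + 2) ∧ P2.getLast? = some (k, k + 1)

/-- A double path (at some point) in `Δ_n`. -/
def DoublePath (n : ℕ) (P1 P2 : List (ℕ × ℕ)) : Prop :=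
  ∃ β, DoublePathAt n β P1 P2

/-- The set `𝒟` of 0/1-arrays (encoded as `d : ℕ → ℕ → Bool`, where `d r i` is the entry
in row `r` of `Δ_n` counted from the top, at the `i`-th position from the right, i.e. at
the point `(i, n - r + i)`):
(1) all entries in the first two rows are `0` (and `d` is supported on the triangle);
(2) row `r` contains exactly `r - 2` ones for `3 ≤ r ≤ n-1`;
(3) strictly between two consecutive `1`'s of row `r` there is exactly one `1` in row
`r-1` (if `r > 3`) and exactly one `1` in row `r+1` (if `r < n-1`);
(4) the bottom-row labels `n, n-1, n, …` (read right to left) attached to the `1`'s of row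
`n-1` are `n, n-1, n, …`, i.e. the `t`-th one from the right sits at a position `i ≡ t`
(mod 2). -/
def Dset (n : ℕ) : Set (ℕ → ℕ → Bool) :=
  {d |
    (∀ r i, d r i = true → 1 ≤ i ∧ i ≤ r ∧ 3 ≤ r ∧ r ≤ n - 1) ∧
    (∀ r, 3 ≤ r → r ≤ n - 1 →
      ((Finset.Icc 1 r).filter fun i => d r i = true).card = r - 2) ∧
    (∀ r i i', d r i = true → d r i' = true → i < i' →
      (∀ i'', i < i'' → i'' < i' → d r i'' = false) →
      ((3 < r → ((Finset.Icc i (i' - 1)).filter fun k => d (r - 1) k = true).card = 1) ∧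
       (r < n - 1 → ((Finset.Icc (i + 1) i').filter fun k => d (r + 1) k = true).card = 1))) ∧
    (∀ i, d (n - 1) i = true →
      ((Finset.Icc 1 i).filter fun k => d (n - 1) k = true).card % 2 = i % 2)}

/-- The array `d(p)` of a double path `p = (P1, P2)` at the top vertex `θ = ε_1 + ε_n`:
`0` exactly at the points of the triangle lying on `p`, and `1` at all other points. -/
def dOf (n : ℕ) (P1 P2 : List (ℕ × ℕ)) : ℕ → ℕ → Bool :=
  fun r i => decide (1 ≤ i ∧ i ≤ r ∧ r ≤ n - 1 ∧ (i, n - r + i) ∉ P1 ++ P2)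



def dFun (n : ℕ) (A B : ℕ → ℕ) : ℕ → ℕ → Bool :=
  fun r i => decide (1 ≤ i ∧ i ≤ r ∧ r ≤ n - 1 ∧ i ≠ A r ∧ i ≠ B r)

lemma dFun_true {n A B r i} :
    dFun n A B r i = true ↔ (1 ≤ i ∧ i ≤ r ∧ r ≤ n - 1 ∧ i ≠ A r ∧ i ≠ B r) := by
  simp [dFun]

lemma dFun_false {n A B r i} :
    dFun n A B r i = false ↔ ¬ (1 ≤ i ∧ i ≤ r ∧ r ≤ n - 1 ∧ i ≠ A r ∧ i ≠ B r) := by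
  simp [dFun]

def pathL (n : ℕ) (f : ℕ → ℕ) : List (ℕ × ℕ) :=
  (List.range (n - 1)).map fun t => (f (t + 1), n - (t + 1) + f (t + 1))

structure Good (n : ℕ) (A B : ℕ → ℕ) : Prop where
  a1 : A 1 = 1
  b1 : B 1 = 1
  stepA : ∀ r, 1 ≤ r → r + 1 ≤ n - 1 → A (r + 1) = A r ∨ A (r + 1) = A r + 1
  stepB : ∀ r, 1 ≤ r → r + 1 ≤ n - 1 → B (r + 1) = B r ∨ B (r + 1) = B r + 1
  blt : ∀ r, 2 ≤ r → r ≤ n - 1 → B r < A r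
  lastrel : A (n - 1) = B (n - 1) + 1

lemma Good.bounds {n A B} (h : Good n A B) :
    ∀ r, 1 ≤ r → r ≤ n - 1 → 1 ≤ B r ∧ B r ≤ A r ∧ A r ≤ r := by
  intro r
  induction r with
  | zero => omega
  | succ m ih =>
    intro _ hle
    rcases Nat.eq_or_lt_of_le (show 1 ≤ m + 1 from by omega) with h1 | h1
    · simp only [← h1, h.a1, h.b1]; omega
    · have hm : 1 ≤ m := by omega
      have := ih hm (by omega)
      rcases h.stepA m hm hle with hA | hA <;> rcases h.stepB m hm hle with hB | hB <;>
        · have := h.blt (m+1) (by omega) hle; omega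

lemma count_two (l u x y : ℕ) (hxy : x ≠ y) (p : ℕ → Bool)
    (hp : ∀ k, l ≤ k → k ≤ u → (p k = true ↔ ¬(k = x ∨ k = y))) :
    ((Finset.Icc l u).filter fun k => p k = true).card
      + ((if l ≤ x ∧ x ≤ u then 1 else 0) + if l ≤ y ∧ y ≤ u then 1 else 0)
      = u + 1 - l := by
  classical
  have h1 := Finset.card_filter_add_card_filter_not
    (s := Finset.Icc l u) (p := fun k => p k = true)
  have h2 : (Finset.Icc l u).filter (fun k => ¬ (p k = true))
      = (Finset.Icc l u).filter (fun k => k = x ∨ k = y) := by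
    apply Finset.filter_congr
    intro k hk
    simp only [Finset.mem_Icc] at hk
    rw [hp k hk.1 hk.2]
    tauto
  have h3 : (Finset.Icc l u).filter (fun k => k = x ∨ k = y)
      = ((Finset.Icc l u).filter (fun k => k = x)) ∪ ((Finset.Icc l u).filter (fun k => k = y)) :=
    Finset.filter_or _ _ _
  have h4 : (((Finset.Icc l u).filter (fun k => k = x)) ∪
      ((Finset.Icc l u).filter (fun k => k = y))).card
      = ((Finset.Icc l u).filter (fun k => k = x)).card
        + ((Finset.Icc l u).filter (fun k => k = y)).card := by
    apply Finset.card_union_of_disjoint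
    simp only [Finset.disjoint_left, Finset.mem_filter]
    rintro a ⟨_, rfl⟩ ⟨_, rfl⟩
    exact hxy rfl
  have h5 : ((Finset.Icc l u).filter (fun k => k = x)).card
      = if l ≤ x ∧ x ≤ u then 1 else 0 := by
    rw [Finset.filter_eq']
    split_ifs with hin h hh
    · simp
    · simp [Finset.mem_Icc] at hin; omega
    · simp [Finset.mem_Icc] at hin; omega
    · simp
  have h6 : ((Finset.Icc l u).filter (fun k => k = y)).card
      = if l ≤ y ∧ y ≤ u then 1 else 0 := by
    rw [Finset.filter_eq']
    split_ifs with hin h hh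
    · simp
    · simp [Finset.mem_Icc] at hin; omega
    · simp [Finset.mem_Icc] at hin; omega
    · simp
  have hcard : (Finset.Icc l u).card = u + 1 - l := Nat.card_Icc l u
  have h7 : ((Finset.Icc l u).filter (fun k => ¬ (p k = true))).card
      = (if l ≤ x ∧ x ≤ u then 1 else 0) + (if l ≤ y ∧ y ≤ u then 1 else 0) := by
    rw [h2, h3, h4, h5, h6]
  omega

lemma good_mem_Dset {n : ℕ} {A B : ℕ → ℕ} (hn : 4 ≤ n) (h : Good n A B) :
    dFun n A B ∈ Dset n := by
  refine ⟨?_, ?_, ?_, ?_⟩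
  · -- (1)
    intro r i ht
    rw [dFun_true] at ht
    obtain ⟨h1, h2, h3, h4, h5⟩ := ht
    have hb := h.bounds r (by omega) h3
    refine ⟨h1, h2, ?_, h3⟩
    by_contra hr
    have hr2 : r = 1 ∨ r = 2 := by omega
    have ha1 := h.a1
    have hb1 := h.b1
    have h22 := h.blt 2 (by omega) (by omega)
    have hbb := h.bounds 2 (by omega) (by omega)
    rcases hr2 with rfl | rfl <;> omega
  · -- (2)
    intro r h3 hle
    have hblt := h.blt r (by omega) hle
    have hb := h.bounds r (by omega) hle
    have key := count_two 1 r (A r) (B r) (by omega) (dFun n A B r) (by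
      intro k hk1 hk2
      rw [dFun_true]
      constructor
      · rintro ⟨_, _, _, _, _⟩; omega
      · intro hk; exact ⟨hk1, hk2, hle, by omega, by omega⟩)
    split_ifs at key <;> omega
  · -- (3)
    intro r i i' hi hi' hlt hbet
    rw [dFun_true] at hi hi'
    obtain ⟨hi1, hi2, hrn, hia, hib⟩ := hi
    obtain ⟨hi'1, hi'2, _, hi'a, hi'b⟩ := hi'
    have hblt := h.blt r (by omega) hrn
    have hb := h.bounds r (by omega) hrn
    have hint : ∀ j, i < j → j < i' → (j = A r ∨ j = B r) := by
      intro j hj1 hj2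
      have := hbet j hj1 hj2
      rw [dFun_false] at this
      have : ¬(1 ≤ j ∧ j ≤ r ∧ r ≤ n - 1 ∧ j ≠ A r ∧ j ≠ B r) := this
      omega
    have hg1 : i + 1 < i' → (i + 1 = A r ∨ i + 1 = B r) := fun hh => hint _ (by omega) hh
    have hg2 : i + 2 < i' → (i + 2 = A r ∨ i + 2 = B r) := fun hh => hint _ (by omega) hh
    have hgap : i' - i ≤ 3 := by
      by_contra hc
      have h1 := hint (i+1) (by omega) (by omega)
      have h2 := hint (i+2) (by omega) (by omega)
      have h3 := hint (i+3) (by omega) (by omega)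
      omega
    constructor
    · intro h3r
      have e : r - 1 + 1 = r := by omega
      have hA0 := h.stepA (r-1) (by omega) (by omega)
      have hB0 := h.stepB (r-1) (by omega) (by omega)
      rw [e] at hA0 hB0
      have hblt0 := h.blt (r-1) (by omega) (by omega)
      have hb0 := h.bounds (r-1) (by omega) (by omega)
      have key := count_two i (i'-1) (A (r-1)) (B (r-1)) (by omega) (dFun n A B (r-1)) (by
        intro k hk1 hk2
        rw [dFun_true]
        constructor
        · rintro ⟨_, _, _, _, _⟩; omega
        · intro hk; exact ⟨by omega, by omega, by omega, by omega, by omega⟩)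
      split_ifs at key <;> omega
    · intro hrn'
      have hA1 := h.stepA r (by omega) (by omega)
      have hB1 := h.stepB r (by omega) (by omega)
      have hblt1 := h.blt (r+1) (by omega) (by omega)
      have hb1 := h.bounds (r+1) (by omega) (by omega)
      have key := count_two (i+1) i' (A (r+1)) (B (r+1)) (by omega) (dFun n A B (r+1)) (by
        intro k hk1 hk2
        rw [dFun_true]
        constructor
        · rintro ⟨_, _, _, _, _⟩; omega
        · intro hk; exact ⟨by omega, by omega, by omega, by omega, by omega⟩)
      split_ifs at key <;> omega
  · -- (4)
    intro i hi
    rw [dFun_true] at hi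
    obtain ⟨h1, h2, _, h4, h5⟩ := hi
    have hblt := h.blt (n-1) (by omega) (by omega)
    have hb := h.bounds (n-1) (by omega) (by omega)
    have hl := h.lastrel
    have key := count_two 1 i (A (n-1)) (B (n-1)) (by omega) (dFun n A B (n-1)) (by
      intro k hk1 hk2
      rw [dFun_true]
      constructor
      · rintro ⟨_, _, _, _, _⟩; omega
      · intro hk; exact ⟨hk1, by omega, by omega, by omega, by omega⟩)
    split_ifs at key <;> omega

lemma bool_char {x : Bool} {P : Prop} (h : x = false ↔ P) : x = true ↔ ¬ P := by
  cases x <;> simp_all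

lemma Dset_to_good {n : ℕ} (hn : 4 ≤ n) {d : ℕ → ℕ → Bool} (hd : d ∈ Dset n) :
    ∃ A B : ℕ → ℕ, Good n A B ∧ d = dFun n A B := by
  obtain ⟨h1, h2, h3, h4⟩ := hd
  -- for each row in range, the two zeros
  have key : ∀ r, ∃ ab : ℕ × ℕ, 1 ≤ r → r ≤ n - 1 →
      (1 ≤ ab.2 ∧ ab.2 ≤ ab.1 ∧ ab.1 ≤ r ∧ (2 ≤ r → ab.2 < ab.1) ∧
       ∀ i, 1 ≤ i → i ≤ r → (d r i = false ↔ (i = ab.1 ∨ i = ab.2))) := by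
    intro r
    by_cases hr : 1 ≤ r ∧ r ≤ n - 1
    swap
    · exact ⟨(0, 0), by tauto⟩
    obtain ⟨hr1, hrn⟩ := hr
    have hlow : ∀ i, d r i = false ∨ (1 ≤ i ∧ i ≤ r ∧ 3 ≤ r) := by
      intro i
      cases hdi : d r i
      · left; rfl
      · right; have := h1 r i hdi; omega
    by_cases hr3 : 3 ≤ r
    · -- two zeros from the cardinality condition
      have hcard2 : ((Finset.Icc 1 r).filter fun i => d r i = false).card = 2 := by
        have ha := Finset.card_filter_add_card_filter_not
          (s := Finset.Icc 1 r) (p := fun i => d r i = true)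
        have hb : (Finset.Icc 1 r).filter (fun i => ¬ (d r i = true))
            = (Finset.Icc 1 r).filter (fun i => d r i = false) := by
          apply Finset.filter_congr; intro k _; simp
        have hc := h2 r hr3 hrn
        have hdd : (Finset.Icc 1 r).card = r := by simp
        have := congrArg Finset.card hb
        omega
      obtain ⟨x, y, hxy, hZ⟩ := Finset.card_eq_two.mp hcard2
      have hmx : x ∈ (Finset.Icc 1 r).filter fun i => d r i = false := by
        rw [hZ]; exact Finset.mem_insert_self _ _
      have hmy : y ∈ (Finset.Icc 1 r).filter fun i => d r i = false := by
        rw [hZ]; exact Finset.mem_insert_of_mem (Finset.mem_singleton_self _)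
      rw [Finset.mem_filter, Finset.mem_Icc] at hmx hmy
      have hiff : ∀ i, 1 ≤ i → i ≤ r → (d r i = false ↔ (i = x ∨ i = y)) := by
        intro i hi1 hi2
        constructor
        · intro hf
          have : i ∈ (Finset.Icc 1 r).filter fun j => d r j = false := by
            rw [Finset.mem_filter, Finset.mem_Icc]; exact ⟨⟨hi1, hi2⟩, hf⟩
          rw [hZ] at this; simpa using this
        · rintro (rfl | rfl); exacts [hmx.2, hmy.2]
      rcases hxy.lt_or_gt with hlt | hlt
      · exact ⟨(y, x), fun _ _ => ⟨hmx.1.1, by omega, hmy.1.2, fun _ => hlt,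
          fun i a b => by rw [hiff i a b]; try tauto⟩⟩
      · exact ⟨(x, y), fun _ _ => ⟨hmy.1.1, by omega, hmx.1.2, fun _ => hlt,
          fun i a b => by rw [hiff i a b]; try tauto⟩⟩
    · -- r = 1 or r = 2 : all entries zero
      have hz : ∀ i, d r i = false := by
        intro i
        rcases hlow i with h | h
        · exact h
        · exact absurd h.2.2 hr3
      have hr12 : r = 1 ∨ r = 2 := by omega
      rcases hr12 with rfl | rfl
      · exact ⟨(1, 1), fun _ _ => ⟨le_refl 1, le_refl 1, le_refl 1, by omega,
          fun i a b => by simp [hz i]; try omega⟩⟩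
      · exact ⟨(2, 1), fun _ _ => ⟨by omega, by omega, by omega, fun _ => by omega,
          fun i a b => by simp [hz i]; try omega⟩⟩
  choose AB hAB using key
  set A : ℕ → ℕ := fun r => (AB r).1 with hAdef
  set B : ℕ → ℕ := fun r => (AB r).2 with hBdef
  have char : ∀ r, 1 ≤ r → r ≤ n - 1 →
      ∀ i, 1 ≤ i → i ≤ r → (d r i = false ↔ (i = A r ∨ i = B r)) :=
    fun r a b => (hAB r a b).2.2.2.2
  have bnds : ∀ r, 1 ≤ r → r ≤ n - 1 → 1 ≤ B r ∧ B r ≤ A r ∧ A r ≤ r :=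
    fun r a b => ⟨(hAB r a b).1, (hAB r a b).2.1, (hAB r a b).2.2.1⟩
  have blt : ∀ r, 2 ≤ r → r ≤ n - 1 → B r < A r :=
    fun r a b => (hAB r (by omega) b).2.2.2.1 a
  have hone : ∀ r, 1 ≤ r → r ≤ n - 1 → ∀ i, 1 ≤ i → i ≤ r → i ≠ A r → i ≠ B r →
      d r i = true := by
    intro r a b i c e f g
    cases hdi : d r i
    · exfalso; rcases (char r a b i c e).mp hdi with h | h <;> omega
    · rfl
  -- the main step lemma
  have step : ∀ r, 1 ≤ r → r + 1 ≤ n - 1 →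
      ((A (r+1) = A r ∨ A (r+1) = A r + 1) ∧ (B (r+1) = B r ∨ B (r+1) = B r + 1)) := by
    intro r hr1 hrn
    have hb1 := bnds r hr1 (by omega)
    have hb2 := bnds (r+1) (by omega) hrn
    by_cases hr2 : r + 1 ≤ 3
    · -- rows 1,2,3 : forced by bounds
      have ha1 := bnds 1 (by omega) (by omega)
      rcases (show r = 1 ∨ r = 2 by omega) with rfl | rfl
      · have := blt 2 (by omega) (by omega); omega
      · have hbl2 := blt 2 (by omega) (by omega)
        have hbl3 := blt 3 (by omega) (by omega)
        have hb22 := bnds 2 (by omega) (by omega)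
        have hb2' : 1 ≤ B 3 ∧ B 3 ≤ A 3 ∧ A 3 ≤ 3 := hb2
        have e3A : A (2 + 1) = A 3 := rfl
        have e3B : B (2 + 1) = B 3 := rfl
        omega
    · -- main combinatorial case, s = r+1 ≥ 4
      set s := r + 1 with hs
      have hs4 : 4 ≤ s := by omega
      have hsn : s ≤ n - 1 := hrn
      have hblt := blt s (by omega) hsn
      have hblt0 := blt (s-1) (by omega) (by omega)
      have hb0 := bnds (s-1) (by omega) (by omega)
      have hes : s - 1 + 1 = s := by omega
      have eA : A (s - 1) = A r := by congr 1
      have eB : B (s - 1) = B r := by congr 1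
      -- chars as "true iff" for rows s and s-1
      have chS : ∀ i, 1 ≤ i → i ≤ s → (d s i = true ↔ ¬(i = A s ∨ i = B s)) :=
        fun i a b => bool_char (char s (by omega) hsn i a b)
      have chS0 : ∀ i, 1 ≤ i → i ≤ s - 1 → (d (s-1) i = true ↔ ¬(i = A (s-1) ∨ i = B (s-1))) :=
        fun i a b => bool_char (char (s-1) (by omega) (by omega) i a b)
      -- Step A : positions with two adjacent ones above are ones in row s-1
      have hforb : ∀ k, 1 ≤ k → k + 1 ≤ s → k ≠ A s → k ≠ B s → k + 1 ≠ A s → k + 1 ≠ B s →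
          (k ≠ A (s-1) ∧ k ≠ B (s-1)) := by
        intro k hk1 hk2 hka hkb hk1a hk1b
        have hu := (h3 s k (k+1) (hone s (by omega) hsn k hk1 (by omega) hka hkb)
          (hone s (by omega) hsn (k+1) (by omega) hk2 hk1a hk1b) (by omega)
          (fun i'' ha hb => absurd hb (by omega))).1 (by omega)
        have key := count_two k k (A (s-1)) (B (s-1)) (by omega) (d (s-1)) (by
          intro j hj1 hj2
          exact chS0 j (by omega) (by omega))
        simp only [show k + 1 - 1 = k from by omega] at hu
        rw [hu] at key
        constructor <;> · intro he; rw [he] at key; split_ifs at key <;> omega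
      have hda : A (s-1) = A s ∨ A (s-1) = B s ∨ A (s-1) + 1 = A s ∨ A (s-1) + 1 = B s := by
        by_contra hc
        push_neg at hc
        exact (hforb (A (s-1)) (by omega) (by omega) hc.1 hc.2.1 hc.2.2.1 hc.2.2.2).1 rfl
      have hdb : B (s-1) = A s ∨ B (s-1) = B s ∨ B (s-1) + 1 = A s ∨ B (s-1) + 1 = B s := by
        by_contra hc
        push_neg at hc
        exact (hforb (B (s-1)) (by omega) (by omega) hc.1 hc.2.1 hc.2.2.1 hc.2.2.2).2 rfl
      -- spanning pairs
      have hspan : ∀ z, z = A s ∨ z = B s → 2 ≤ z → z + 1 ≤ s →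
          z - 1 ≠ A s → z - 1 ≠ B s → z + 1 ≠ A s → z + 1 ≠ B s →
          (((z - 1 ≤ A (s-1) ∧ A (s-1) ≤ z) ∧ ¬(z - 1 ≤ B (s-1) ∧ B (s-1) ≤ z)) ∨
           (¬(z - 1 ≤ A (s-1) ∧ A (s-1) ≤ z) ∧ (z - 1 ≤ B (s-1) ∧ B (s-1) ≤ z))) := by
        intro z hz hz2 hzs hma hmb hpa hpb
        have hu := (h3 s (z-1) (z+1) (hone s (by omega) hsn (z-1) (by omega) (by omega) hma hmb)
          (hone s (by omega) hsn (z+1) (by omega) hzs hpa hpb) (by omega)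
          (fun i'' ha hb => by
            have hi'' : i'' = z := by omega
            rw [hi'']
            exact (char s (by omega) hsn z (by omega) (by omega)).mpr (by tauto))).1
          (by omega)
        have key := count_two (z-1) z (A (s-1)) (B (s-1)) (by omega) (d (s-1)) (by
          intro j hj1 hj2
          exact chS0 j (by omega) (by omega))
        simp only [show z + 1 - 1 = z from by omega] at hu
        rw [hu] at key
        split_ifs at key <;> omega
      by_cases hba : A s = B s + 1
      · omega
      · have hba' : B s + 1 < A s := by omega
        by_cases hbb : 2 ≤ B s
        · have hsB := hspan (B s) (Or.inr rfl) hbb (by omega) (by omega) (by omega)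
            (by omega) (by omega)
          by_cases haS : A s + 1 ≤ s
          · have hsA := hspan (A s) (Or.inl rfl) (by omega) haS (by omega) (by omega)
              (by omega) (by omega)
            omega
          · omega
        · by_cases haS : A s + 1 ≤ s
          · have hsA := hspan (A s) (Or.inl rfl) (by omega) haS (by omega) (by omega)
              (by omega) (by omega)
            omega
          · omega
  have good : Good n A B := by
    refine ⟨?_, ?_, fun r a b => (step r a b).1, fun r a b => (step r a b).2, blt, ?_⟩
    · have := bnds 1 (by omega) (by omega); omega
    · have := bnds 1 (by omega) (by omega); omega
    · -- lastrel from condition (4)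
      have hbl := blt (n-1) (by omega) (by omega)
      have hbn := bnds (n-1) (by omega) (by omega)
      by_contra hne
      have hlt : B (n-1) + 1 < A (n-1) := by omega
      have hi : d (n-1) (B (n-1) + 1) = true :=
        hone (n-1) (by omega) (by omega) _ (by omega) (by omega) (by omega) (by omega)
      have h4' := h4 _ hi
      have key := count_two 1 (B (n-1) + 1) (A (n-1)) (B (n-1)) (by omega) (d (n-1)) (by
        intro j hj1 hj2
        exact bool_char (char (n-1) (by omega) (by omega) j (by omega) (by omega)))
      split_ifs at key <;> omega
  refine ⟨A, B, good, ?_⟩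
  funext r i
  by_cases hin : 1 ≤ i ∧ i ≤ r ∧ r ≤ n - 1
  · have hch := char r (by omega) hin.2.2 i hin.1 hin.2.1
    by_cases hab : i = A r ∨ i = B r
    · rw [hch.mpr hab, eq_comm, dFun_false]
      omega
    · rw [(bool_char hch).mpr hab, eq_comm, dFun_true]
      exact ⟨hin.1, hin.2.1, hin.2.2, by omega, by omega⟩
  · have hdf : d r i = false := by
      cases hdi : d r i
      · rfl
      · have := h1 r i hdi; omega
    rw [hdf, eq_comm, dFun_false]
    omega

lemma pathL_length (n : ℕ) (f : ℕ → ℕ) : (pathL n f).length = n - 1 := by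
  simp [pathL]

lemma pathL_getElem (n : ℕ) (f : ℕ → ℕ) (t : ℕ) (h : t < (pathL n f).length) :
    (pathL n f)[t] = (f (t + 1), n - (t + 1) + f (t + 1)) := by
  simp [pathL]

lemma pathL_getD (n : ℕ) (f : ℕ → ℕ) (t : ℕ) (h : t < n - 1) :
    (pathL n f).getD t (0, 0) = (f (t + 1), n - (t + 1) + f (t + 1)) := by
  rw [List.getD_eq_getElem _ _ (by rw [pathL_length]; omega), pathL_getElem]

lemma pathL_mem {n : ℕ} {f : ℕ → ℕ} {x : ℕ × ℕ} (h : x ∈ pathL n f) :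
    ∃ t, t < n - 1 ∧ x = (f (t + 1), n - (t + 1) + f (t + 1)) := by
  rw [pathL, List.mem_map] at h
  obtain ⟨t, ht, rfl⟩ := h
  rw [List.mem_range] at ht
  exact ⟨t, ht, rfl⟩

lemma pathL_head (n : ℕ) (hn : 4 ≤ n) (f : ℕ → ℕ) :
    (pathL n f).head? = some (f 1, n - 1 + f 1) := by
  rw [List.head?_eq_getElem?, List.getElem?_eq_getElem (by rw [pathL_length]; omega),
    pathL_getElem]

lemma pathL_getLast (n : ℕ) (hn : 4 ≤ n) (f : ℕ → ℕ) :
    (pathL n f).getLast? = some (f (n - 1), 1 + f (n - 1)) := by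
  rw [List.getLast?_eq_getElem?, List.getElem?_eq_getElem
    (by rw [pathL_length]; omega), pathL_getElem]
  rw [pathL_length]
  have e1 : n - 1 - 1 + 1 = n - 1 := by omega
  rw [e1, show n - (n - 1) = 1 from by omega]

lemma steps_bounds {n : ℕ} {f : ℕ → ℕ} (hf1 : f 1 = 1)
    (hstep : ∀ r, 1 ≤ r → r + 1 ≤ n - 1 → f (r + 1) = f r ∨ f (r + 1) = f r + 1) :
    ∀ r, 1 ≤ r → r ≤ n - 1 → 1 ≤ f r ∧ f r ≤ r := by
  intro r
  induction r with
  | zero => omega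
  | succ m ih =>
    intro _ hle
    rcases Nat.eq_or_lt_of_le (show 1 ≤ m + 1 from by omega) with h1 | h1
    · simp only [← h1, hf1]; omega
    · have hm : 1 ≤ m := by omega
      have := ih hm (by omega)
      rcases hstep m hm hle with hA | hA <;> omega

lemma steps_isPath {n : ℕ} {f : ℕ → ℕ} (hn : 4 ≤ n) (hf1 : f 1 = 1)
    (hstep : ∀ r, 1 ≤ r → r + 1 ≤ n - 1 → f (r + 1) = f r ∨ f (r + 1) = f r + 1) :
    IsPath n (pathL n f) := by
  have hb := steps_bounds hf1 hstep
  refine ⟨?_, ?_, ?_, ?_⟩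
  · intro hcon
    have := congrArg List.length hcon
    rw [pathL_length] at this
    simp at this
    omega
  · intro x hx
    obtain ⟨t, ht, rfl⟩ := pathL_mem hx
    have := hb (t + 1) (by omega) (by omega)
    refine ⟨by omega, ?_, ?_⟩ <;> simp only <;> omega
  · apply List.isChain_iff_getElem.mpr
    intro t ht
    rw [pathL_length] at ht
    have h1 : t < (pathL n f).length := by rw [pathL_length]; omega
    have h2 : t + 1 < (pathL n f).length := by rw [pathL_length]; omega
    rw [pathL_getElem n f t h1,
      pathL_getElem n f (t + 1) h2]
    have hb1 := hb (t + 1) (by omega) (by omega)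
    have hb2 := hb (t + 2) (by omega) (by omega)
    have hst := hstep (t + 1) (by omega) (by omega)
    constructor
    · simp only; omega
    · rcases hst with hA | hA
      · right; simp only [Prod.mk.injEq]; omega
      · left; simp only [Prod.mk.injEq]; omega
  · refine ⟨f (n - 1), ?_⟩
    rw [pathL_getLast n hn]
    simp only [Option.some.injEq, Prod.mk.injEq]
    exact ⟨trivial, by omega⟩

lemma good_doublePath {n : ℕ} {A B : ℕ → ℕ} (hn : 4 ≤ n) (h : Good n A B) :
    DoublePathAt n (1, n) (pathL n A) (pathL n B) := by
  have hbA := steps_bounds h.a1 h.stepA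
  have hbB := steps_bounds h.b1 h.stepB
  refine ⟨steps_isPath hn h.a1 h.stepA, steps_isPath hn h.b1 h.stepB, ?_, ?_, ?_, ?_, ?_⟩
  · rw [pathL_length, pathL_length]
  · rw [pathL_head n hn, h.a1]
    congr 2
    omega
  · rw [pathL_head n hn, h.b1]
    congr 2
    omega
  · intro t ht1 ht2
    rw [pathL_length] at ht2
    rw [pathL_getD n A t (by omega), pathL_getD n B t (by omega)]
    have := h.blt (t + 1) (by omega) (by omega)
    simp only
    omega
  · have hl := h.lastrel
    refine ⟨B (n - 1), ?_, ?_⟩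
    · rw [pathL_getLast n hn]
      simp only [Option.some.injEq, Prod.mk.injEq]
      omega
    · rw [pathL_getLast n hn]
      simp only [Option.some.injEq, Prod.mk.injEq]
      exact ⟨trivial, by omega⟩

lemma good_dOf {n : ℕ} {A B : ℕ → ℕ} (hn : 4 ≤ n) :
    dOf n (pathL n A) (pathL n B) = dFun n A B := by
  funext r i
  rw [dOf, dFun]
  rw [decide_eq_decide]
  constructor
  · rintro ⟨h1, h2, h3, h4⟩
    refine ⟨h1, h2, h3, ?_, ?_⟩
    · intro he
      apply h4
      rw [List.mem_append]
      left
      rw [pathL, List.mem_map]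
      exact ⟨r - 1, by rw [List.mem_range]; omega,
        by rw [show r - 1 + 1 = r from by omega, he]⟩
    · intro he
      apply h4
      rw [List.mem_append]
      right
      rw [pathL, List.mem_map]
      exact ⟨r - 1, by rw [List.mem_range]; omega,
        by rw [show r - 1 + 1 = r from by omega, he]⟩
  · rintro ⟨h1, h2, h3, h4, h5⟩
    refine ⟨h1, h2, h3, ?_⟩
    intro hmem
    rw [List.mem_append] at hmem
    rcases hmem with hm | hm <;>
    · obtain ⟨t, ht, he⟩ := pathL_mem hm
      rw [Prod.mk.injEq] at he
      have ht1 : t + 1 = r := by omega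
      rw [ht1] at he
      omega

lemma path_struct {n : ℕ} {P : List (ℕ × ℕ)} (hn : 4 ≤ n) (hP : IsPath n P)
    (hh : P.head? = some (1, n)) :
    ∃ f : ℕ → ℕ, f 1 = 1 ∧
      (∀ r, 1 ≤ r → r + 1 ≤ n - 1 → f (r + 1) = f r ∨ f (r + 1) = f r + 1) ∧
      P = pathL n f := by
  obtain ⟨hne, hmem, hchain, k, hlast⟩ := hP
  have hlen0 : 0 < P.length := List.length_pos_iff.mpr hne
  have hget0 : P.getD 0 (0, 0) = (1, n) := by
    rw [List.getD_eq_getElem _ _ hlen0]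
    rw [List.head?_eq_getElem?, List.getElem?_eq_getElem hlen0] at hh
    exact Option.some_injective _ hh
  have hchain' := List.isChain_iff_getElem.mp hchain
  have hstepD : ∀ t, t + 1 < P.length →
      (P.getD t (0, 0)).1 + 1 < (P.getD t (0, 0)).2 ∧
      (P.getD (t + 1) (0, 0) = ((P.getD t (0, 0)).1 + 1, (P.getD t (0, 0)).2) ∨
       P.getD (t + 1) (0, 0) = ((P.getD t (0, 0)).1, (P.getD t (0, 0)).2 - 1)) := by
    intro t ht
    have h1 : t < P.length := by omega
    have := hchain' t (by omega)
    rw [← List.getD_eq_getElem P (0, 0) h1, ← List.getD_eq_getElem P (0, 0) ht] at this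
    exact this
  have key : ∀ t, t < P.length →
      (P.getD t (0, 0)).2 = n - (t + 1) + (P.getD t (0, 0)).1 := by
    intro t
    induction t with
    | zero => intro _; rw [hget0]; simp only; omega
    | succ m ih =>
      intro hm1
      have hm : m < P.length := by omega
      have ihm := ih hm
      obtain ⟨hlt, hq⟩ := hstepD m hm1
      have hmemm := hmem (P.getD m (0, 0)) (by
        rw [List.getD_eq_getElem P (0, 0) hm]; exact List.getElem_mem _)
      rcases hq with hq | hq <;> rw [hq] <;> simp only <;> omega
  have hlenP : P.length = n - 1 := by
    have hl1 : P.length - 1 < P.length := by omega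
    have := key (P.length - 1) hl1
    rw [List.getLast?_eq_getElem?, List.getElem?_eq_getElem hl1] at hlast
    rw [← List.getD_eq_getElem P (0, 0) hl1] at hlast
    rw [Option.some.injEq] at hlast
    rw [hlast] at this
    simp only at this
    have hmemL := hmem (P.getD (P.length - 1) (0, 0)) (by
      rw [List.getD_eq_getElem P (0, 0) hl1]; exact List.getElem_mem _)
    rw [hlast] at hmemL
    simp only at hmemL
    omega
  refine ⟨fun r => (P.getD (r - 1) (0, 0)).1,
    by show (P.getD 0 (0, 0)).1 = 1; rw [hget0], ?_, ?_⟩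
  · intro r hr1 hrn
    have hst := (hstepD (r - 1) (by omega)).2
    rw [show r - 1 + 1 = r from by omega] at hst
    change (P.getD r (0, 0)).1 = (P.getD (r - 1) (0, 0)).1 ∨
      (P.getD r (0, 0)).1 = (P.getD (r - 1) (0, 0)).1 + 1
    rcases hst with hq | hq
    · right; rw [hq]
    · left; rw [hq]
  · apply List.ext_getElem (by rw [pathL_length]; omega)
    intro t h1t h2t
    rw [pathL_getElem]
    have ht : t < P.length := h1t
    rw [← List.getD_eq_getElem P (0, 0) ht]
    have hk := key t ht
    refine Prod.ext ?_ ?_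
    · rfl
    · simp only
      rw [hk]
      rfl

lemma doublePath_struct {n : ℕ} {P1 P2 : List (ℕ × ℕ)} (hn : 4 ≤ n)
    (hDP : DoublePathAt n (1, n) P1 P2) :
    ∃ A B : ℕ → ℕ, Good n A B ∧ P1 = pathL n A ∧ P2 = pathL n B := by
  obtain ⟨hP1, hP2, hlen, hh1, hh2, hsum, k, hl1, hl2⟩ := hDP
  obtain ⟨A, hA1, hAs, hPA⟩ := path_struct hn hP1 hh1
  obtain ⟨B, hB1, hBs, hPB⟩ := path_struct hn hP2 hh2
  rw [hPA, pathL_getLast n hn] at hl1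
  rw [hPB, pathL_getLast n hn] at hl2
  rw [Option.some.injEq, Prod.mk.injEq] at hl1 hl2
  refine ⟨A, B, ⟨hA1, hB1, hAs, hBs, ?_, by omega⟩, hPA, hPB⟩
  intro r hr2 hrn
  have ht := hsum (r - 1) (by omega) (by rw [hPA, pathL_length]; omega)
  rw [hPA, hPB, pathL_getD n A (r-1) (by omega), pathL_getD n B (r-1) (by omega)] at ht
  rw [show r - 1 + 1 = r from by omega] at ht
  simp only at ht
  omega

/-- The map `p ↦ d(p)` is a bijection from the set of double paths at `θ` onto `𝒟`. -/
theorem stmt16 (n : ℕ) (hn : 4 ≤ n) :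
    Set.BijOn (fun p : List (ℕ × ℕ) × List (ℕ × ℕ) => dOf n p.1 p.2)
      {p | DoublePathAt n (1, n) p.1 p.2} (Dset n) := by
  refine ⟨?_, ?_, ?_⟩
  · -- MapsTo
    intro p hp
    obtain ⟨A, B, hg, h1, h2⟩ := doublePath_struct hn hp
    show dOf n p.1 p.2 ∈ Dset n
    rw [h1, h2, good_dOf hn]
    exact good_mem_Dset hn hg
  · -- InjOn
    intro p hp q hq heq
    obtain ⟨A, B, hg, h1, h2⟩ := doublePath_struct hn hp
    obtain ⟨A', B', hg', h1', h2'⟩ := doublePath_struct hn hq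
    simp only at heq
    rw [h1, h2, good_dOf hn, h1', h2', good_dOf hn] at heq
    have hAB : ∀ r, 1 ≤ r → r ≤ n - 1 → A r = A' r ∧ B r = B' r := by
      intro r hr1 hrn
      have bA := hg.bounds r hr1 hrn
      have bA' := hg'.bounds r hr1 hrn
      have f1 := congrFun (congrFun heq r) (A r)
      have f2 := congrFun (congrFun heq r) (B r)
      have f3 := congrFun (congrFun heq r) (A' r)
      have f4 := congrFun (congrFun heq r) (B' r)
      rw [dFun, dFun, decide_eq_decide] at f1 f2 f3 f4
      by_cases hr2 : 2 ≤ r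
      · have l1 := hg.blt r hr2 hrn
        have l2 := hg'.blt r hr2 hrn
        constructor <;> omega
      · have e1 : r = 1 := by omega
        rw [e1, hg.a1, hg.b1, hg'.a1, hg'.b1]
        exact ⟨rfl, rfl⟩
    have hA : pathL n A = pathL n A' := by
      apply List.ext_getElem (by rw [pathL_length, pathL_length])
      intro t h1t h2t
      rw [pathL_length] at h1t
      rw [pathL_getElem _ _ _ h2t, pathL_getElem _ _ _ (by rwa [pathL_length])]
      rw [(hAB (t + 1) (by omega) (by omega)).1]
    have hB : pathL n B = pathL n B' := by
      apply List.ext_getElem (by rw [pathL_length, pathL_length])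
      intro t h1t h2t
      rw [pathL_length] at h1t
      rw [pathL_getElem _ _ _ h2t, pathL_getElem _ _ _ (by rwa [pathL_length])]
      rw [(hAB (t + 1) (by omega) (by omega)).2]
    have : p.1 = q.1 := by rw [h1, h1', hA]
    have : p.2 = q.2 := by rw [h2, h2', hB]
    exact Prod.ext ‹p.1 = q.1› ‹p.2 = q.2›
  · -- SurjOn
    intro d hd
    obtain ⟨A, B, hg, rfl⟩ := Dset_to_good hn hd
    exact ⟨(pathL n A, pathL n B), good_doublePath hn hg, good_dOf hn⟩
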